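/- Let f : ℝ → ℝ be a bounded measurable function with |f(ξ)| ≤ 1 for all ξ, compactly supported, satisfying sgn(f(ξ)) = sgn(ξ) for a.e. ξ (i.e., f(ξ) ≥ 0 for ξ > 0 and f(ξ) ≤ 0 for ξ < 0). Set v := ∫_ℝ f(ξ) dξ. Then for every ξ ∈ ℝ, ∫_{-∞}^{ξ} (f(s) - χ(s,v)) ds ≤ 0. -/

import Mathlib

open MeasureTheory

noncomputable def chi (ξ u : ℝ) : ℝ :=
  if 0 < ξ ∧ ξ < u then 1 else if u < ξ ∧ ξ < 0 then -1 else 0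

theorem stmt_5 (f : ℝ → ℝ) (hmeas : Measurable f) (hb : ∀ ξ, |f ξ| ≤ 1)
    (hsupp : HasCompactSupport f)
    (hsgn : ∀ ξ : ℝ, (0 < ξ → 0 ≤ f ξ) ∧ (ξ < 0 → f ξ ≤ 0))
    (v : ℝ) (hv : v = ∫ ξ : ℝ, f ξ) :
    ∀ ξ : ℝ, (∫ s in Set.Iio ξ, (f s - chi s v)) ≤ 0 := by
  -- integrability of f
  have hIf : Integrable f := by
    refine Integrable.mono' (g := (tsupport f).indicator (fun _ => (1:ℝ)))
      ((integrable_indicator_iff (isClosed_tsupport f).measurableSet).2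
        (integrableOn_const (ne_of_lt hsupp.isCompact.measure_lt_top)))
      hmeas.aestronglyMeasurable ?_
    refine Filter.Eventually.of_forall fun x => ?_
    by_cases hx : x ∈ tsupport f
    · simp [Set.indicator_of_mem hx, Real.norm_eq_abs, hb x]
    · simp [Set.indicator_of_notMem hx, image_eq_zero_of_notMem_tsupport hx]
  have chi_eq : ∀ s : ℝ, chi s v =
      Set.indicator (Set.Ioo 0 v) (fun _ => (1:ℝ)) s
        - Set.indicator (Set.Ioo v 0) (fun _ => (1:ℝ)) s := by
    intro s
    simp only [chi, Set.indicator_apply, Set.mem_Ioo]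
    split_ifs with h1 h2 h2 <;>
      first
        | exact ((by linarith [h1.1, h1.2, h2.1, h2.2] : False)).elim
        | norm_num
  have hInd1 : Integrable (Set.indicator (Set.Ioo 0 v) (fun _ => (1:ℝ))) := by
    rw [integrable_indicator_iff measurableSet_Ioo]
    exact integrableOn_const (ne_of_lt (by rw [Real.volume_Ioo]; exact ENNReal.ofReal_lt_top))
  have hInd2 : Integrable (Set.indicator (Set.Ioo v 0) (fun _ => (1:ℝ))) := by
    rw [integrable_indicator_iff measurableSet_Ioo]
    exact integrableOn_const (ne_of_lt (by rw [Real.volume_Ioo]; exact ENNReal.ofReal_lt_top))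
  have hIchi : Integrable (fun s => chi s v) := by
    rw [funext chi_eq]; exact hInd1.sub hInd2
  -- splitting the integral of f at a point
  have hsplit : ∀ a : ℝ, (∫ s, f s) = (∫ s in Set.Iio a, f s) + ∫ s in Set.Ici a, f s := by
    intro a
    rw [← setIntegral_univ, ← Set.Iio_union_Ici (a := a),
      setIntegral_union (Set.Iio_disjoint_Ici le_rfl) measurableSet_Ici
        hIf.integrableOn hIf.integrableOn]
  intro ξ
  rw [integral_sub hIf.integrableOn hIchi.integrableOn, sub_nonpos]
  -- compute the integral of chi over Iio ξ
  have hchi_int : (∫ s in Set.Iio ξ, chi s v)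
      = ((min ξ v - 0) ⊔ 0) - ((min ξ 0 - v) ⊔ 0) := by
    simp only [chi_eq]
    rw [integral_sub hInd1.integrableOn hInd2.integrableOn,
      setIntegral_indicator measurableSet_Ioo, setIntegral_indicator measurableSet_Ioo,
      Set.Iio_inter_Ioo, Set.Iio_inter_Ioo, setIntegral_const, setIntegral_const,
      smul_eq_mul, mul_one, smul_eq_mul, mul_one, Real.volume_real_Ioo, Real.volume_real_Ioo]
  rw [hchi_int, sub_zero]
  rcases le_or_gt ξ 0 with hξ | hξ
  · -- ξ ≤ 0
    have hmv : (min ξ v ⊔ 0) = 0 := by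
      have : min ξ v ≤ 0 := le_trans (min_le_left _ _) hξ
      exact sup_eq_right.2 this
    have hm0 : min ξ 0 = ξ := min_eq_left hξ
    rw [hmv, hm0, zero_sub]
    rcases le_or_gt ξ v with hξv | hξv
    · have : (ξ - v) ⊔ 0 = 0 := sup_eq_right.2 (by linarith)
      rw [this, neg_zero]
      exact setIntegral_nonpos measurableSet_Iio fun s hs => (hsgn s).2 (lt_of_lt_of_le hs hξ)
    · have : (ξ - v) ⊔ 0 = ξ - v := sup_eq_left.2 (by linarith)
      rw [this]
      -- need ∫_{Iio ξ} f ≤ v - ξ, i.e. ∫_{Ici ξ} f ≥ ξ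
      have h2 := hsplit ξ
      have h3 : ξ ≤ ∫ s in Set.Ici ξ, f s := by
        rw [← Set.Ico_union_Ici_eq_Ici hξ,
          setIntegral_union (by
            rw [Set.disjoint_left]; intro x hx hx'; exact absurd hx' (not_le.2 hx.2))
            measurableSet_Ici hIf.integrableOn hIf.integrableOn]
        have hA : ξ ≤ ∫ s in Set.Ico ξ 0, f s := by
          have := setIntegral_mono_on (f := fun _ : ℝ => (-1:ℝ)) (g := f)
            (s := Set.Ico ξ 0)
            (integrableOn_const (ne_of_lt (by rw [Real.volume_Ico]; exact ENNReal.ofReal_lt_top)))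
            hIf.integrableOn measurableSet_Ico
            (fun x hx => neg_le_of_abs_le (hb x))
          rw [setIntegral_const, Real.volume_real_Ico_of_le (by linarith),
            smul_eq_mul] at this
          linarith
        have hB : 0 ≤ ∫ s in Set.Ici (0:ℝ), f s := by
          rw [integral_Ici_eq_integral_Ioi]
          exact setIntegral_nonneg measurableSet_Ioi fun x hx => (hsgn x).1 hx
        linarith
      linarith [hv, h2]
  · -- ξ > 0
    have hm0 : min ξ 0 = 0 := min_eq_right hξ.le
    rw [hm0]
    have bound_v : (∫ s in Set.Iio ξ, f s) ≤ v := by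
      have h2 := hsplit ξ
      have h3 : 0 ≤ ∫ s in Set.Ici ξ, f s :=
        setIntegral_nonneg measurableSet_Ici fun x hx => (hsgn x).1 (lt_of_lt_of_le hξ hx)
      linarith [hv]
    have bound_ξ : (∫ s in Set.Iio ξ, f s) ≤ ξ := by
      rw [← Set.Iio_union_Ico_eq_Iio hξ.le,
        setIntegral_union (by
          rw [Set.disjoint_left]; intro x hx hx'; exact absurd hx.out (not_lt.2 hx'.1))
          measurableSet_Ico hIf.integrableOn hIf.integrableOn]
      have hA : (∫ s in Set.Iio (0:ℝ), f s) ≤ 0 :=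
        setIntegral_nonpos measurableSet_Iio fun s hs => (hsgn s).2 hs
      have hB : (∫ s in Set.Ico (0:ℝ) ξ, f s) ≤ ξ := by
        have := setIntegral_mono_on (f := f) (g := fun _ : ℝ => (1:ℝ))
          (s := Set.Ico 0 ξ) hIf.integrableOn
          (integrableOn_const (ne_of_lt (by rw [Real.volume_Ico]; exact ENNReal.ofReal_lt_top)))
          measurableSet_Ico (fun x hx => le_of_abs_le (hb x))
        rw [setIntegral_const, Real.volume_real_Ico_of_le (by linarith),
          smul_eq_mul] at this
        linarith
      linarith
    rcases le_total v 0 with hv0 | hv0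
    · have h1 : (min ξ v ⊔ 0) = 0 :=
        sup_eq_right.2 (by have := min_le_right ξ v; linarith)
      have h2 : ((0 - v) ⊔ 0) = 0 - v := sup_eq_left.2 (by linarith)
      rw [h1, h2]
      linarith [bound_v]
    · have h2 : ((0 - v) ⊔ 0) = 0 := sup_eq_right.2 (by linarith)
      have h1 : (min ξ v ⊔ 0) = min ξ v := sup_eq_left.2 (le_min hξ.le hv0)
      rw [h1, h2, sub_zero]
      exact le_min bound_ξ bound_v
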